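/- Let S = {1,…,N} with its standard order, C0 the successor cyclic permutation, and (C, Γ1, Γ2) an associative BD-structure on S with α0 = (N,1) ∉ Γ2. For k ≥ 1 let P(k) ⊆ P_1 be the domain of τ^k and P(k)^− = {(i,j) ∈ P(k) : i > j}. Then for every k ≥ 1 and every (i1, i2) ∈ P(k)^−, the set S is the disjoint union of S1 = {i ∈ S : i < i1 and C^k(i) > C^k(i1)} and S2 = {i ∈ S : i > i2 and C^k(i) < C^k(i2)}. -/

import Mathlib

noncomputable section

variable {S : Type}

/-- Membership in `P_ι` (for `Γ = Γ_ι ⊆ Γ_{C0}`): pairs `(s, C0^m s)`, `m ≥ 1`, all of whose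
intermediate edges lie in `Γ`. -/
def inP (C0 : Equiv.Perm S) (Γ : Set (S × S)) (p : S × S) : Prop :=
  ∃ m : ℕ, 1 ≤ m ∧ p.2 = (C0 ^ m) p.1 ∧
    ∀ j : ℕ, j < m → ((C0 ^ j) p.1, (C0 ^ (j + 1)) p.1) ∈ Γ

/-- `τ^k` is defined at `p` (i.e. `p ∈ P(k)`): `(C×C)^l p ∈ P_1` for all `0 ≤ l ≤ k-1`. -/
def tauDef (C0 C : Equiv.Perm S) (Γ1 : Set (S × S)) (k : ℕ) (p : S × S) : Prop :=
  ∀ l : ℕ, l < k → inP C0 Γ1 ((C ^ l) p.1, (C ^ l) p.2)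

/-- The successor cyclic permutation `C0` of `Fin N`. -/
def C0std (N : ℕ) [NeZero N] : Equiv.Perm (Fin N) := Equiv.addRight (1 : Fin N)

/-- `α0 = (N, 1)`, i.e. `(max, min)` of `Fin N`. -/
def alpha0 (N : ℕ) [NeZero N] : Fin N × Fin N := ((0 - 1 : Fin N), (0 : Fin N))

open Fin.NatCast Fin.CommRing

lemma c0std_apply (N : ℕ) [NeZero N] (x : Fin N) : C0std N x = x + 1 := rfl

lemma c0_pow_apply (N : ℕ) [NeZero N] : ∀ (j : ℕ) (x : Fin N),
    ((C0std N) ^ j) x = x + (j : Fin N)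
  | 0, x => by simp
  | j + 1, x => by
      rw [pow_succ, Equiv.Perm.mul_apply, c0_pow_apply N j]
      show x + 1 + (j : Fin N) = x + ((j : ℕ) + 1 : ℕ)
      push_cast; ring

lemma neg_one_val (N : ℕ) [NeZero N] : ((0 : Fin N) - 1).val = N - 1 := by
  have hN : 0 < N := Nat.pos_of_ne_zero (NeZero.ne N)
  rw [Fin.sub_def]
  simp only [Fin.val_zero, Fin.val_one']
  rcases Nat.lt_or_ge N 2 with h | h
  · have : N = 1 := by omega
    subst this; rfl
  · have h1 : 1 % N = 1 := Nat.mod_eq_of_lt (by omega)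
    rw [h1, Nat.add_zero, Nat.mod_eq_of_lt (by omega)]

/-- Rigidity of one application of `C` along an arc whose edges lie in `Γ1`. -/
lemma BD_rigid {N : ℕ} [NeZero N] (C : Equiv.Perm (Fin N))
    (Γ1 Γ2 : Set (Fin N × Fin N))
    (hΓ2 : Γ2 ⊆ {p : Fin N × Fin N | p.2 = C0std N p.1})
    (hmap : (fun p : Fin N × Fin N => (C p.1, C p.2)) '' Γ1 = Γ2)
    (hα0 : alpha0 N ∉ Γ2) (s : Fin N) (m : ℕ)
    (hedges : ∀ j : ℕ, j < m → (s + (j : Fin N), s + (j : Fin N) + 1) ∈ Γ1) :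
    ∀ j : ℕ, j ≤ m → C (s + (j : Fin N)) = C s + (j : Fin N) ∧ (C s).val + j < N := by
  intro j
  induction j with
  | zero => intro _; exact ⟨by simp, by simpa using (C s).isLt⟩
  | succ j ih =>
      intro hj1
      obtain ⟨h1, h2⟩ := ih (by omega)
      have hjm : j < m := by omega
      have hjN : j < N := by omega
      have hedge := hedges j hjm
      have hin2 : (C (s + (j : Fin N)), C (s + (j : Fin N) + 1)) ∈ Γ2 := by
        rw [← hmap]; exact ⟨_, hedge, rfl⟩
      have hnext : C (s + (j : Fin N) + 1) = C (s + (j : Fin N)) + 1 := by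
        have := hΓ2 hin2
        simpa [c0std_apply] using this
      have hv : (C (s + (j : Fin N))).val = (C s).val + j := by
        rw [h1, Fin.val_add, Fin.val_cast_of_lt hjN, Nat.mod_eq_of_lt h2]
      have hne : C (s + (j : Fin N)) ≠ (0 : Fin N) - 1 := by
        intro he
        apply hα0
        have hpair : (C (s + (j : Fin N)), C (s + (j : Fin N) + 1)) = alpha0 N := by
          rw [alpha0, hnext, he]
          exact Prod.ext rfl (by ring)
        rw [← hpair]; exact hin2
      have hvne : (C s).val + j ≠ N - 1 := by
        intro he
        exact hne (Fin.ext (by rw [hv, neg_one_val, he]))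
      have h2' : (C s).val + (j + 1) < N := by omega
      refine ⟨?_, h2'⟩
      have hc : (((j : ℕ) + 1 : ℕ) : Fin N) = (j : Fin N) + 1 := by push_cast; ring
      rw [hc, ← add_assoc, hnext, h1, add_assoc]

theorem stmt13 (N : ℕ) [NeZero N]
    (C : Equiv.Perm (Fin N))
    (hC : ∀ s t : Fin N, ∃ k : ℕ, (C ^ k) s = t)
    (Γ1 Γ2 : Set (Fin N × Fin N))
    (hΓ1 : Γ1 ⊂ {p : Fin N × Fin N | p.2 = C0std N p.1})
    (hΓ2 : Γ2 ⊂ {p : Fin N × Fin N | p.2 = C0std N p.1})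
    (hmap : (fun p : Fin N × Fin N => (C p.1, C p.2)) '' Γ1 = Γ2)
    (hα0 : alpha0 N ∉ Γ2) :
    ∀ (k : ℕ), 1 ≤ k → ∀ i1 i2 : Fin N,
      tauDef (C0std N) C Γ1 k (i1, i2) → i2 < i1 →
      ∀ i : Fin N,
        (i < i1 ∧ (C ^ k) i1 < (C ^ k) i) ↔ ¬ (i2 < i ∧ (C ^ k) i < (C ^ k) i2) := by
  intro k hk i1 i2 htau hlt i
  have pow_s : ∀ (l : ℕ) (x : Fin N), (C ^ (l + 1)) x = C ((C ^ l) x) := by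
    intro l x
    rw [pow_succ', Equiv.Perm.mul_apply]
  set m : ℕ := (i2 - i1).val with hm
  have hmlt : m < N := (i2 - i1).isLt
  have hm1 : 1 ≤ m := by
    have hne : i2 - i1 ≠ 0 := sub_ne_zero_of_ne (ne_of_lt hlt)
    exact Nat.pos_of_ne_zero (fun h => hne (Fin.ext (by rw [Fin.val_zero]; exact h)))
  have hF1 : i2 = i1 + (m : Fin N) := by
    rw [hm, Fin.cast_val_eq_self]; ring
  have hlt' : i2.val < i1.val := hlt
  have hstar : i1.val + m = i2.val + N := by
    have hv : i2.val = (i1.val + m) % N := by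
      rw [hF1, Fin.val_add, Fin.val_cast_of_lt hmlt]
    rcases Nat.lt_or_ge (i1.val + m) N with h | h
    · rw [Nat.mod_eq_of_lt h] at hv; omega
    · have h2 : i1.val + m - N < N := by
        have := i1.isLt; omega
      rw [Nat.mod_eq_sub_mod h, Nat.mod_eq_of_lt h2] at hv
      have := i1.isLt; omega
  -- main induction over levels
  have key : ∀ l : ℕ, l ≤ k →
      ((C ^ l) i2 = (C ^ l) i1 + (m : Fin N)) ∧
      (∀ j : ℕ, j ≤ m → (C ^ l) (i1 + (j : Fin N)) = (C ^ l) i1 + (j : Fin N)) ∧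
      (1 ≤ l → ((C ^ l) i1).val + m < N) := by
    intro l
    induction l with
    | zero =>
        intro _
        refine ⟨by simpa using hF1, fun j hj => by simp, by omega⟩
    | succ l ih =>
        intro hlk
        obtain ⟨ihA, ihB, -⟩ := ih (by omega)
        have hin := htau l (by omega)
        obtain ⟨ml, hml1, hb, hedges⟩ := hin
        rw [c0_pow_apply] at hb
        have hcast : ((ml : ℕ) : Fin N) = ((m : ℕ) : Fin N) := by
          have h := hb.symm.trans ihA
          exact add_left_cancel h
        have hmod : ml % N = m := by
          have h := congrArg Fin.val hcast
          rwa [Fin.val_natCast, Fin.val_natCast, Nat.mod_eq_of_lt hmlt] at h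
        have hmle : m ≤ ml := by
          rcases Nat.lt_or_ge ml N with h | h
          · rw [Nat.mod_eq_of_lt h] at hmod; omega
          · omega
        have hedges' : ∀ j : ℕ, j < m →
            ((C ^ l) i1 + (j : Fin N), (C ^ l) i1 + (j : Fin N) + 1) ∈ Γ1 := by
          intro j hj
          have h2 := hedges j (lt_of_lt_of_le hj hmle)
          rw [c0_pow_apply, c0_pow_apply] at h2
          have e : (((j : ℕ) + 1 : ℕ) : Fin N) = (j : Fin N) + 1 := by push_cast; ring
          rw [e, ← add_assoc] at h2
          exact h2
        have R := BD_rigid C Γ1 Γ2 hΓ2.subset hmap hα0 ((C ^ l) i1) m hedges'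
        refine ⟨?_, ?_, ?_⟩
        · rw [pow_s l i2, pow_s l i1, ihA, (R m le_rfl).1]
        · intro j hj
          rw [pow_s l (i1 + (j : Fin N)), pow_s l i1, ihB j hj, (R j hj).1]
        · intro _
          rw [pow_s l i1]
          exact (R m le_rfl).2
  obtain ⟨hF4, hF2, hF3⟩ := key k le_rfl
  have hF3' : ((C ^ k) i1).val + m < N := hF3 hk
  have hvals : ∀ j : ℕ, j ≤ m → (((C ^ k) i1) + (j : Fin N)).val = ((C ^ k) i1).val + j := by
    intro j hj
    rw [Fin.val_add, Fin.val_cast_of_lt (lt_of_le_of_lt hj hmlt), Nat.mod_eq_of_lt (by omega)]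
  have harc : ∀ j : ℕ, j ≤ m → (i1 + (j : Fin N)).val = (i1.val + j) % N := by
    intro j hj
    rw [Fin.val_add, Fin.val_cast_of_lt (lt_of_le_of_lt hj hmlt)]
  have hDk2val : ((C ^ k) i2).val = ((C ^ k) i1).val + m := by
    rw [hF4]; exact hvals m le_rfl
  have hiN := i.isLt
  have hi1N := i1.isLt
  rcases le_or_gt i1.val i.val with hge | hlt1
  · -- i ≥ i1 : i ∈ S2, not in S1
    set j : ℕ := i.val - i1.val with hjdef
    have hj : j < m := by omega
    have hi : i = i1 + (j : Fin N) := by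
      apply Fin.ext
      rw [harc _ hj.le, Nat.mod_eq_of_lt (by omega)]
      omega
    have hCk : ((C ^ k) i).val = ((C ^ k) i1).val + j := by
      rw [hi, hF2 _ hj.le]
      exact hvals _ hj.le
    constructor
    · rintro ⟨h1, -⟩
      exact absurd (Fin.lt_def.mp h1) (by omega)
    · intro h
      exfalso
      exact h ⟨Fin.lt_def.mpr (by omega), Fin.lt_def.mpr (by omega)⟩
  · rcases le_or_gt i.val i2.val with hle2 | hmid
    · -- i ≤ i2 : i ∈ S1, not in S2
      set j : ℕ := i.val + N - i1.val with hjdef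
      have hjm : j ≤ m := by omega
      have hj1 : 1 ≤ j := by omega
      have hi : i = i1 + (j : Fin N) := by
        apply Fin.ext
        rw [harc _ hjm]
        have he : i1.val + j = i.val + N := by omega
        rw [he, Nat.add_mod_right, Nat.mod_eq_of_lt hiN]
      have hCk : ((C ^ k) i).val = ((C ^ k) i1).val + j := by
        rw [hi, hF2 _ hjm]
        exact hvals _ hjm
      constructor
      · intro _
        rintro ⟨h2, -⟩
        exact absurd (Fin.lt_def.mp h2) (by omega)
      · intro _
        exact ⟨Fin.lt_def.mpr (by omega), Fin.lt_def.mpr (by omega)⟩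
    · -- i2 < i < i1 : C^k i outside the image interval
      have hnotin : ¬ (((C ^ k) i1).val ≤ ((C ^ k) i).val ∧
          ((C ^ k) i).val ≤ ((C ^ k) i1).val + m) := by
        rintro ⟨hlo, hhi⟩
        set j : ℕ := ((C ^ k) i).val - ((C ^ k) i1).val with hjdef
        have hjm : j ≤ m := by omega
        have e1 : (C ^ k) i = (C ^ k) i1 + ((j : ℕ) : Fin N) := by
          apply Fin.ext
          rw [hvals _ hjm]
          omega
        have e2 : (C ^ k) i = (C ^ k) (i1 + ((j : ℕ) : Fin N)) :=
          e1.trans (hF2 _ hjm).symm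
        have e3 := (C ^ k).injective e2
        have e4 := congrArg Fin.val e3
        rw [harc _ hjm] at e4
        rcases Nat.lt_or_ge (i1.val + j) N with h | h
        · rw [Nat.mod_eq_of_lt h] at e4; omega
        · rw [Nat.mod_eq_sub_mod h, Nat.mod_eq_of_lt (by omega)] at e4
          omega
      rcases Nat.lt_or_ge ((C ^ k) i).val ((C ^ k) i1).val with hlo | hhi
      · constructor
        · rintro ⟨-, h2⟩
          exact absurd (Fin.lt_def.mp h2) (by omega)
        · intro h
          exact absurd ⟨Fin.lt_def.mpr hmid, Fin.lt_def.mpr (by omega)⟩ h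
      · have hhi2 : ((C ^ k) i1).val + m < ((C ^ k) i).val := by
          by_contra hcon
          exact hnotin ⟨hhi, by omega⟩
        constructor
        · intro _
          rintro ⟨-, h2⟩
          have := Fin.lt_def.mp h2
          omega
        · intro _
          exact ⟨Fin.lt_def.mpr hlt1, Fin.lt_def.mpr (by omega)⟩
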